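/- Let (A_i; M_ij; φ_ikj) be a generalised Morita context of size n with unital rings and with A_t = R for a fixed index t, let (R, S; N, L; ζ, θ) be a Morita context, and let (A′_i; M′_ij; φ′_ikj) be their composition. Then the tuple ([A_i; M_ij], [A′_i; M′_ij]; N_m, L_m; |α|, |α′|) is a Morita context between the generalised matrix rings: N_m is an [A_i; M_ij]–[A′_i; M′_ij]-bimodule, L_m is an [A′_i; M′_ij]–[A_i; M_ij]-bimodule, |α| : N_m ⊗_{[A′_i; M′_ij]} L_m → [A_i; M_ij] and |α′| : L_m ⊗_{[A_i; M_ij]} N_m → [A′_i; M′_ij] are bimodule homomorphisms, and the mixed associativity conditions |α|(x ⊗ y)·x′ = x·|α′|(y ⊗ x′) and |α′|(y ⊗ x)·y′ = y·|α|(x ⊗ y′) hold. -/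
import Mathlib


universe u

open MulOpposite

/-- A biadditive map `M × X → Z` which is balanced over the ring `A`,
where `ra` is a right `A`-action on `M` and `la` is a left `A`-action on `X`. -/
def IsBalancedMap (A : Type u) [Ring A] {M X Z : Type u}
    [AddCommGroup M] [AddCommGroup X] [AddCommGroup Z]
    (ra : M → A → M) (la : A → X → X) (g : M → X → Z) : Prop :=
  (∀ m m' x, g (m + m') x = g m x + g m' x) ∧
  (∀ m x x', g m (x + x') = g m x + g m x') ∧
  (∀ (a : A) m x, g (ra m a) x = g m (la a x))

/-- `τ : M × X → T` exhibits `T` as the tensor product `M ⊗[A] X` of a right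
`A`-module `M` and a left `A`-module `X`: `τ` is biadditive and `A`-balanced and
every biadditive `A`-balanced map out of `M × X` factors uniquely through `τ`. -/
structure IsBTensor (A : Type u) [Ring A] {M X : Type u}
    [AddCommGroup M] [AddCommGroup X]
    (ra : M → A → M) (la : A → X → X)
    (T : Type u) [AddCommGroup T] (τ : M → X → T) : Prop where
  balanced : IsBalancedMap A ra la τ
  lift : ∀ (Z : Type u) [AddCommGroup Z] (g : M → X → Z),
    IsBalancedMap A ra la g → ∃! h : T →+ Z, ∀ m x, h (τ m x) = g m x

/-- Surjectivity of the additive map `M ⊗ X → Z` induced by `g : M × X → Z`. -/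
def TensorSurj {M X Z : Type u} [AddCommGroup Z] (g : M → X → Z) : Prop :=
  AddSubgroup.closure {z : Z | ∃ m x, z = g m x} = ⊤

/-- A (classical) Morita context `(R, S; N, L; ζ, θ)`: `N` is an `R`–`S`-bimodule,
`L` is an `S`–`R`-bimodule, and `zeta : N ⊗[S] L → R`, `theta : L ⊗[R] N → S` are
bimodule homomorphisms (recorded here as balanced biadditive bilinear maps)
satisfying the mixed associativity conditions. -/
structure MoritaCtx (R S N L : Type u) [Ring R] [Ring S]
    [AddCommGroup N] [AddCommGroup L]
    [Module R N] [Module Sᵐᵒᵖ N] [SMulCommClass R Sᵐᵒᵖ N]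
    [Module S L] [Module Rᵐᵒᵖ L] [SMulCommClass S Rᵐᵒᵖ L] where
  zeta : N → L → R
  theta : L → N → S
  zeta_add_left : ∀ n n' l, zeta (n + n') l = zeta n l + zeta n' l
  zeta_add_right : ∀ n l l', zeta n (l + l') = zeta n l + zeta n l'
  zeta_balanced : ∀ (s : S) n l, zeta (op s • n) l = zeta n (s • l)
  zeta_left : ∀ (r : R) n l, zeta (r • n) l = r * zeta n l
  zeta_right : ∀ (r : R) n l, zeta n (op r • l) = zeta n l * r
  theta_add_left : ∀ l l' n, theta (l + l') n = theta l n + theta l' n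
  theta_add_right : ∀ l n n', theta l (n + n') = theta l n + theta l n'
  theta_balanced : ∀ (r : R) l n, theta (op r • l) n = theta l (r • n)
  theta_left : ∀ (s : S) l n, theta (s • l) n = s * theta l n
  theta_right : ∀ (s : S) l n, theta l (op s • n) = theta l n * s
  assoc_left : ∀ n l n', zeta n l • n' = op (theta l n') • n
  assoc_right : ∀ l n l', theta l n • l' = op (zeta n l') • l

/-- A generalised Morita context `(A_i; M_ij; φ_ikj)` of size `n`:
rings `A i`, `A_i`–`A_j`-bimodules `M i j` with `M i i` identified with the
regular bimodule `A i` via the additive isomorphisms `δ i`, and bimodule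
homomorphisms `φ i k j : M i k ⊗[A k] M k j → M i j` (recorded as balanced
biadditive bilinear maps) which restrict to the action/multiplication maps on
diagonal indices and satisfy the mixed associativity conditions. -/
structure GenMoritaCtx (n : ℕ) (A : Fin n → Type u) (M : Fin n → Fin n → Type u)
    [∀ i, Ring (A i)] [∀ i j, AddCommGroup (M i j)]
    [∀ i j, Module (A i) (M i j)] [∀ i j, Module ((A j)ᵐᵒᵖ) (M i j)]
    [∀ i j, SMulCommClass (A i) ((A j)ᵐᵒᵖ) (M i j)] where
  φ : ∀ i k j, M i k → M k j → M i j
  δ : ∀ i, A i ≃+ M i i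
  φ_add_left : ∀ i k j (x x' : M i k) (y : M k j), φ i k j (x + x') y = φ i k j x y + φ i k j x' y
  φ_add_right : ∀ i k j (x : M i k) (y y' : M k j), φ i k j x (y + y') = φ i k j x y + φ i k j x y'
  φ_balanced : ∀ i k j (a : A k) (x : M i k) (y : M k j), φ i k j (op a • x) y = φ i k j x (a • y)
  φ_smul_left : ∀ i k j (a : A i) (x : M i k) (y : M k j), φ i k j (a • x) y = a • φ i k j x y
  φ_smul_right : ∀ i k j (a : A j) (x : M i k) (y : M k j), φ i k j x (op a • y) = op a • φ i k j x y
  δ_mul_left : ∀ i (a b : A i), δ i (a * b) = a • δ i b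
  δ_mul_right : ∀ i (a b : A i), δ i (a * b) = op b • δ i a
  φ_diag_left : ∀ k j (a : A k) (y : M k j), φ k k j (δ k a) y = a • y
  φ_diag_right : ∀ i k (a : A k) (x : M i k), φ i k k x (δ k a) = op a • x
  φ_assoc : ∀ i h k j (x : M i h) (y : M h k) (z : M k j),
    φ i h j x (φ h k j y z) = φ i k j (φ i h k x y) z

variable {n : ℕ} {A : Fin n → Type u} {M : Fin n → Fin n → Type u}
    [∀ i, Ring (A i)] [∀ i j, AddCommGroup (M i j)]
    [∀ i j, Module (A i) (M i j)] [∀ i j, Module ((A j)ᵐᵒᵖ) (M i j)]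
    [∀ i j, SMulCommClass (A i) ((A j)ᵐᵒᵖ) (M i j)]

/-- The matrix multiplication `(x·y)_{ij} = ∑ k, φ_ikj (x_ik ⊗ y_kj)` on `⊕_{i,j} M i j`. -/
def matMul (ctx : GenMoritaCtx n A M) (x y : ∀ i j, M i j) : ∀ i j, M i j :=
  fun i j => ∑ k, ctx.φ i k j (x i k) (y k j)

/-- The identity matrix: `1_{A_i}` on the diagonal and `0` elsewhere. -/
def matOne (ctx : GenMoritaCtx n A M) : ∀ i j, M i j :=
  fun i j => if h : i = j then cast (congrArg (M i) h) (ctx.δ i 1) else 0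

/-- `ε : Λ ≃ ⊕_{i,j} M i j` exhibits the ring `Λ` as the generalised matrix ring
`[A_i; M_ij]` of the generalised Morita context `ctx`. -/
structure IsMatrixRing (ctx : GenMoritaCtx n A M) (Λ : Type u) [Ring Λ]
    (ε : Λ → ∀ i j, M i j) : Prop where
  bijective : Function.Bijective ε
  map_add : ∀ x y, ε (x + y) = ε x + ε y
  map_mul : ∀ x y, ε (x * y) = matMul ctx (ε x) (ε y)
  map_one : ε 1 = matOne ctx

/-- The scalar multiplication of an explicitly given module structure. -/
def msmul {Λ X : Type u} [Ring Λ] [AddCommGroup X] (inst : Module Λ X) (c : Λ) (x : X) : X :=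
  letI := inst; c • x

section Composition

variable (t : Fin n) (S N L : Type u) [Ring S]
  [AddCommGroup N] [AddCommGroup L]
  [Module (A t) N] [Module Sᵐᵒᵖ N] [SMulCommClass (A t) Sᵐᵒᵖ N]
  [Module S L] [Module ((A t)ᵐᵒᵖ) L] [SMulCommClass S ((A t)ᵐᵒᵖ) L]
  (A' : Fin n → Type u) (M' : Fin n → Fin n → Type u)
  [∀ i, Ring (A' i)] [∀ i j, AddCommGroup (M' i j)]
  [∀ i j, Module (A' i) (M' i j)] [∀ i j, Module ((A' j)ᵐᵒᵖ) (M' i j)]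
  [∀ i j, SMulCommClass (A' i) ((A' j)ᵐᵒᵖ) (M' i j)]

variable (A M)

/-- Data identifying the family `A'`, `M'` with the constituents of the composition
of a generalised Morita context `(A_i; M_ij; φ_ikj)` (with `A t = R`) with a Morita
context `(R, S; N, L; ζ, θ)`:  `A' t = S`, `A' i = A i` for `i ≠ t`, `M' t t = S`,
`M' i t = M i t ⊗[R] N` for `i ≠ t`, `M' t j = L ⊗[R] M t j` for `j ≠ t` and
`M' i j = M i j` for `i, j ≠ t`, where the tensor products are abstract tensor
products (universal property) and the identifications are compatible with all the
actions involved. -/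
structure CompSetup : Type u where
  ρ : ∀ i, i ≠ t → (A' i ≃+* A i)
  ρt : A' t ≃+* S
  ee : ∀ i j, i ≠ t → j ≠ t → (M i j ≃+ M' i j)
  tmulN : ∀ i, i ≠ t → (M i t → N → M' i t)
  tmulL : ∀ j, j ≠ t → (L → M t j → M' t j)
  uS : S ≃+ M' t t
  tmulN_tensor : ∀ i (hi : i ≠ t),
    IsBTensor (A t) (fun (m : M i t) a => op a • m) (fun a (x : N) => a • x)
      (M' i t) (tmulN i hi)
  tmulL_tensor : ∀ j (hj : j ≠ t),
    IsBTensor (A t) (fun (l : L) a => op a • l) (fun a (x : M t j) => a • x)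
      (M' t j) (tmulL j hj)
  ee_smul_left : ∀ i j (hi : i ≠ t) (hj : j ≠ t) (a' : A' i) (x : M i j),
    a' • ee i j hi hj x = ee i j hi hj (ρ i hi a' • x)
  ee_smul_right : ∀ i j (hi : i ≠ t) (hj : j ≠ t) (b' : A' j) (x : M i j),
    op b' • ee i j hi hj x = ee i j hi hj (op (ρ j hj b') • x)
  tmulN_smul_left : ∀ i (hi : i ≠ t) (a' : A' i) (m : M i t) (x : N),
    a' • tmulN i hi m x = tmulN i hi (ρ i hi a' • m) x
  tmulN_smul_right : ∀ i (hi : i ≠ t) (s' : A' t) (m : M i t) (x : N),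
    op s' • tmulN i hi m x = tmulN i hi m (op (ρt s') • x)
  tmulL_smul_left : ∀ j (hj : j ≠ t) (s' : A' t) (l : L) (m : M t j),
    s' • tmulL j hj l m = tmulL j hj (ρt s' • l) m
  tmulL_smul_right : ∀ j (hj : j ≠ t) (b' : A' j) (l : L) (m : M t j),
    op b' • tmulL j hj l m = tmulL j hj l (op (ρ j hj b') • m)
  uS_smul_left : ∀ (s' : A' t) (s : S), s' • uS s = uS (ρt s' * s)
  uS_smul_right : ∀ (s' : A' t) (s : S), op s' • uS s = uS (s * ρt s')

/-- `ctx'` is the composition of the generalised Morita context `ctx` (with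
`A t = R`) with the Morita context `mc = (R, S; N, L; ζ, θ)`: its identity
identifications are the given ones and its structure maps `φ'` are given by the
eight defining formulas of the composition (Definition 3.1 of the paper), stated
on pure tensors through the identifications of `cs`. -/
structure IsComposition (ctx : GenMoritaCtx n A M) (mc : MoritaCtx (A t) S N L)
    (cs : CompSetup A M t S N L A' M') (ctx' : GenMoritaCtx n A' M') : Prop where
  delta_spec : ∀ i (hi : i ≠ t) (a' : A' i),
    ctx'.δ i a' = cs.ee i i hi hi (ctx.δ i (cs.ρ i hi a'))
  delta_t_spec : ∀ s' : A' t, ctx'.δ t s' = cs.uS (cs.ρt s')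
  phi_ttt : ∀ s s' : S, ctx'.φ t t t (cs.uS s) (cs.uS s') = cs.uS (s * s')
  phi_itt : ∀ i (hi : i ≠ t) (m : M i t) (x : N) (s : S),
    ctx'.φ i t t (cs.tmulN i hi m x) (cs.uS s) = cs.tmulN i hi m (op s • x)
  phi_ttj : ∀ j (hj : j ≠ t) (s : S) (l : L) (m : M t j),
    ctx'.φ t t j (cs.uS s) (cs.tmulL j hj l m) = cs.tmulL j hj (s • l) m
  phi_tkt : ∀ k (hk : k ≠ t) (l : L) (m : M t k) (m' : M k t) (x : N),
    ctx'.φ t k t (cs.tmulL k hk l m) (cs.tmulN k hk m' x)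
      = cs.uS (mc.theta (op ((ctx.δ t).symm (ctx.φ t k t m m')) • l) x)
  phi_ikt : ∀ i k (hi : i ≠ t) (hk : k ≠ t) (z : M i k) (m : M k t) (x : N),
    ctx'.φ i k t (cs.ee i k hi hk z) (cs.tmulN k hk m x)
      = cs.tmulN i hi (ctx.φ i k t z m) x
  phi_tkj : ∀ k j (hk : k ≠ t) (hj : j ≠ t) (l : L) (m : M t k) (y : M k j),
    ctx'.φ t k j (cs.tmulL k hk l m) (cs.ee k j hk hj y)
      = cs.tmulL j hj l (ctx.φ t k j m y)
  phi_itj : ∀ i j (hi : i ≠ t) (hj : j ≠ t) (m : M i t) (x : N) (l : L) (m' : M t j),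
    ctx'.φ i t j (cs.tmulN i hi m x) (cs.tmulL j hj l m')
      = cs.ee i j hi hj (ctx.φ i t j (op (mc.zeta x l) • m) m')
  phi_ikj : ∀ i k j (hi : i ≠ t) (hk : k ≠ t) (hj : j ≠ t) (z : M i k) (y : M k j),
    ctx'.φ i k j (cs.ee i k hi hk z) (cs.ee k j hk hj y)
      = cs.ee i j hi hj (ctx.φ i k j z y)

end Composition

section Excision

variable (t : Fin n) (S N L : Type u) [Ring S]
  [AddCommGroup N] [AddCommGroup L]
  [Module (A t) N] [Module Sᵐᵒᵖ N] [SMulCommClass (A t) Sᵐᵒᵖ N]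
  [Module S L] [Module ((A t)ᵐᵒᵖ) L] [SMulCommClass S ((A t)ᵐᵒᵖ) L]
  (A' : Fin n → Type u) (M' : Fin n → Fin n → Type u)
  [∀ i, Ring (A' i)] [∀ i j, AddCommGroup (M' i j)]
  [∀ i j, Module (A' i) (M' i j)] [∀ i j, Module ((A' j)ᵐᵒᵖ) (M' i j)]
  [∀ i j, SMulCommClass (A' i) ((A' j)ᵐᵒᵖ) (M' i j)]
  (NN : Fin n → Fin n → Type u) [∀ i j, AddCommGroup (NN i j)]
  (LL : Fin n → Fin n → Type u) [∀ i j, AddCommGroup (LL i j)]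

variable (A M)

/-- Data identifying the family `NN` with the column-excision: `NN i j = M i j`
for `j ≠ t` and `NN i t = M i t ⊗[R] N` (an abstract tensor product) for all `i`
(in particular `NN t t = (M t t) ⊗[R] N`, i.e. `R ⊗[R] N`). -/
structure ColExc where
  en : ∀ i j, j ≠ t → (M i j ≃+ NN i j)
  π : ∀ i, M i t → N → NN i t
  π_tensor : ∀ i,
    IsBTensor (A t) (fun (m : M i t) a => op a • m) (fun a (x : N) => a • x)
      (NN i t) (π i)

/-- Data identifying the family `LL` with the row-excision: `LL i j = M i j`
for `i ≠ t` and `LL t j = L ⊗[R] M t j` (an abstract tensor product) for all `j`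
(in particular `LL t t = L ⊗[R] (M t t)`, i.e. `L ⊗[R] R`). -/
structure RowExc where
  el : ∀ i j, i ≠ t → (M i j ≃+ LL i j)
  lp : ∀ j, L → M t j → LL t j
  lp_tensor : ∀ j,
    IsBTensor (A t) (fun (l : L) a => op a • l) (fun a (x : M t j) => a • x)
      (LL t j) (lp j)

/-- The component maps `β_ikj` of the left action of the generalised matrix ring
`[A_i; M_ij]` on the column-excision: `β_ikj = φ_ikj` for `j ≠ t` and
`β_ikt = φ_ikt ⊗ 1_N` for `j = t`, stated on pure tensors. -/
structure ColExcLeft (ctx : GenMoritaCtx n A M) (ce : ColExc A M t N NN)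
    (β : ∀ i k j, M i k → NN k j → NN i j) : Prop where
  add_left : ∀ i k j (x x' : M i k) (y : NN k j),
    β i k j (x + x') y = β i k j x y + β i k j x' y
  add_right : ∀ i k j (x : M i k) (y y' : NN k j),
    β i k j x (y + y') = β i k j x y + β i k j x y'
  spec_ne : ∀ i k j (hj : j ≠ t) (x : M i k) (y : M k j),
    β i k j x (ce.en k j hj y) = ce.en i j hj (ctx.φ i k j x y)
  spec_t : ∀ i k (z : M i k) (m : M k t) (x : N),
    β i k t z (ce.π k m x) = ce.π i (ctx.φ i k t z m) x

/-- The component maps `β'_ikj` of the right action of the generalised matrix ring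
`[A'_i; M'_ij]` of the composition on the column-excision, stated on pure tensors
through the identifications: `β'_ikj = φ'_ikj` for `i ≠ t`, and on row `t`:
`β'_ttt(r ⊗ n ⊗ s) = r ⊗ (n·s)`, `β'_ttj(r ⊗ n ⊗ l ⊗ m) = (r·ζ(n ⊗ l))·m` for
`j ≠ t`, `β'_tht = φ_tht ⊗ 1_N` for `h ≠ t` and `β'_thj = φ_thj` for `h, j ≠ t`. -/
structure ColExcRight (ctx : GenMoritaCtx n A M) (mc : MoritaCtx (A t) S N L)
    (cs : CompSetup A M t S N L A' M') (ce : ColExc A M t N NN)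
    (β' : ∀ i k j, NN i k → M' k j → NN i j) : Prop where
  add_left : ∀ i k j (x x' : NN i k) (y : M' k j),
    β' i k j (x + x') y = β' i k j x y + β' i k j x' y
  add_right : ∀ i k j (x : NN i k) (y y' : M' k j),
    β' i k j x (y + y') = β' i k j x y + β' i k j x y'
  spec₁ : ∀ i k j (hk : k ≠ t) (hj : j ≠ t) (x : M i k) (y : M k j),
    β' i k j (ce.en i k hk x) (cs.ee k j hk hj y) = ce.en i j hj (ctx.φ i k j x y)
  spec₂ : ∀ i k (hk : k ≠ t) (x : M i k) (m : M k t) (nn : N),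
    β' i k t (ce.en i k hk x) (cs.tmulN k hk m nn) = ce.π i (ctx.φ i k t x m) nn
  spec₃ : ∀ i j (hj : j ≠ t) (m : M i t) (nn : N) (l : L) (m' : M t j),
    β' i t j (ce.π i m nn) (cs.tmulL j hj l m')
      = ce.en i j hj (ctx.φ i t j (op (mc.zeta nn l) • m) m')
  spec₄ : ∀ i (m : M i t) (nn : N) (s : S),
    β' i t t (ce.π i m nn) (cs.uS s) = ce.π i m (op s • nn)

/-- The component maps `γ'_ikj` of the left action of `[A'_i; M'_ij]` on the
row-excision, stated on pure tensors through the identifications: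
`γ'_ikj = φ'_ikj` for `j ≠ t`, and on column `t`: `γ'_ttt(s ⊗ l ⊗ r) = (s·l) ⊗ r`,
`γ'_tkt = 1_L ⊗ φ_tkt` for `k ≠ t`, `γ'_itt(m ⊗ n ⊗ l ⊗ r) = m·(ζ(n ⊗ l)·r)` for
`i ≠ t` and `γ'_ikt = φ_ikt` for `i, k ≠ t`. -/
structure RowExcLeft (ctx : GenMoritaCtx n A M) (mc : MoritaCtx (A t) S N L)
    (cs : CompSetup A M t S N L A' M') (re : RowExc A M t L LL)
    (γ' : ∀ i k j, M' i k → LL k j → LL i j) : Prop where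
  add_left : ∀ i k j (x x' : M' i k) (y : LL k j),
    γ' i k j (x + x') y = γ' i k j x y + γ' i k j x' y
  add_right : ∀ i k j (x : M' i k) (y y' : LL k j),
    γ' i k j x (y + y') = γ' i k j x y + γ' i k j x y'
  spec₁ : ∀ i k j (hi : i ≠ t) (hk : k ≠ t) (x : M i k) (y : M k j),
    γ' i k j (cs.ee i k hi hk x) (re.el k j hk y) = re.el i j hi (ctx.φ i k j x y)
  spec₂ : ∀ k j (hk : k ≠ t) (l : L) (m : M t k) (y : M k j),
    γ' t k j (cs.tmulL k hk l m) (re.el k j hk y) = re.lp j l (ctx.φ t k j m y)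
  spec₃ : ∀ i j (hi : i ≠ t) (m : M i t) (nn : N) (l : L) (m' : M t j),
    γ' i t j (cs.tmulN i hi m nn) (re.lp j l m')
      = re.el i j hi (ctx.φ i t j (op (mc.zeta nn l) • m) m')
  spec₄ : ∀ j (s : S) (l : L) (m : M t j),
    γ' t t j (cs.uS s) (re.lp j l m) = re.lp j (s • l) m

/-- The component maps `γ_ikj` of the right action of `[A_i; M_ij]` on the
row-excision: `γ_ikj = φ_ikj` for `i ≠ t` and `γ_tkj = 1_L ⊗ φ_tkj` on row `t`,
stated on pure tensors. -/
structure RowExcRight (ctx : GenMoritaCtx n A M) (re : RowExc A M t L LL)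
    (γ : ∀ i k j, LL i k → M k j → LL i j) : Prop where
  add_left : ∀ i k j (x x' : LL i k) (y : M k j),
    γ i k j (x + x') y = γ i k j x y + γ i k j x' y
  add_right : ∀ i k j (x : LL i k) (y y' : M k j),
    γ i k j x (y + y') = γ i k j x y + γ i k j x y'
  spec_ne : ∀ i k j (hi : i ≠ t) (x : M i k) (y : M k j),
    γ i k j (re.el i k hi x) y = re.el i j hi (ctx.φ i k j x y)
  spec_t : ∀ k j (l : L) (m : M t k) (y : M k j),
    γ t k j (re.lp k l m) y = re.lp j l (ctx.φ t k j m y)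

/-- The component maps `α_ikj : N_ik ⊗ L_kj → M_ij` of the column-row ligation:
`α_ikj = φ_ikj` for `k ≠ t` and
`α_itj(m ⊗ n ⊗ l ⊗ m') = φ_itj((m·ζ(n ⊗ l)) ⊗ m')` for `k = t`,
stated on pure tensors. -/
structure ColRowLigation (ctx : GenMoritaCtx n A M) (mc : MoritaCtx (A t) S N L)
    (ce : ColExc A M t N NN) (re : RowExc A M t L LL)
    (α : ∀ i k j, NN i k → LL k j → M i j) : Prop where
  add_left : ∀ i k j (x x' : NN i k) (y : LL k j),
    α i k j (x + x') y = α i k j x y + α i k j x' y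
  add_right : ∀ i k j (x : NN i k) (y y' : LL k j),
    α i k j x (y + y') = α i k j x y + α i k j x y'
  spec_ne : ∀ i k j (hk : k ≠ t) (x : M i k) (y : M k j),
    α i k j (ce.en i k hk x) (re.el k j hk y) = ctx.φ i k j x y
  spec_t : ∀ i j (m : M i t) (nn : N) (l : L) (m' : M t j),
    α i t j (ce.π i m nn) (re.lp j l m') = ctx.φ i t j (op (mc.zeta nn l) • m) m'

/-- The component maps `α'_ikj : L_ik ⊗ N_kj → M'_ij` of the row-column ligation:
`α'_ikj = φ_ikj` for `i, j ≠ t`, `α'_ikt = φ_ikt ⊗ 1_N` for `i ≠ t = j`,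
`α'_tkj = 1_L ⊗ φ_tkj` for `i = t ≠ j` and
`α'_tkt(l ⊗ m ⊗ m' ⊗ n) = θ((l·φ_tkt(m ⊗ m')) ⊗ n)` for `i = t = j`,
stated on pure tensors through the identifications. -/
structure RowColLigation (ctx : GenMoritaCtx n A M) (mc : MoritaCtx (A t) S N L)
    (cs : CompSetup A M t S N L A' M') (ce : ColExc A M t N NN)
    (re : RowExc A M t L LL)
    (α' : ∀ i k j, LL i k → NN k j → M' i j) : Prop where
  add_left : ∀ i k j (x x' : LL i k) (y : NN k j),
    α' i k j (x + x') y = α' i k j x y + α' i k j x' y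
  add_right : ∀ i k j (x : LL i k) (y y' : NN k j),
    α' i k j x (y + y') = α' i k j x y + α' i k j x y'
  spec₁ : ∀ i k j (hi : i ≠ t) (hj : j ≠ t) (x : M i k) (y : M k j),
    α' i k j (re.el i k hi x) (ce.en k j hj y) = cs.ee i j hi hj (ctx.φ i k j x y)
  spec₂ : ∀ i k (hi : i ≠ t) (x : M i k) (m : M k t) (nn : N),
    α' i k t (re.el i k hi x) (ce.π k m nn) = cs.tmulN i hi (ctx.φ i k t x m) nn
  spec₃ : ∀ k j (hj : j ≠ t) (l : L) (m : M t k) (y : M k j),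
    α' t k j (re.lp k l m) (ce.en k j hj y) = cs.tmulL j hj l (ctx.φ t k j m y)
  spec₄ : ∀ k (l : L) (m : M t k) (m' : M k t) (nn : N),
    α' t k t (re.lp k l m) (ce.π k m' nn)
      = cs.uS (mc.theta (op ((ctx.δ t).symm (ctx.φ t k t m m')) • l) nn)

end Excision


section StmtTwelveHelpers

theorem IsBTensor.closure_top {R₀ : Type u} [Ring R₀] {M₀ X₀ : Type u}
    [AddCommGroup M₀] [AddCommGroup X₀] {ra : M₀ → R₀ → M₀} {la : R₀ → X₀ → X₀}
    {T : Type u} [AddCommGroup T] {τ : M₀ → X₀ → T}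
    (ht : IsBTensor R₀ ra la T τ) :
    AddSubgroup.closure {z : T | ∃ m x, z = τ m x} = ⊤ := by
  set T₀ := AddSubgroup.closure {z : T | ∃ m x, z = τ m x} with hT₀
  have mem : ∀ m x, τ m x ∈ T₀ := fun m x => AddSubgroup.subset_closure ⟨m, x, rfl⟩
  obtain ⟨bal1, bal2, bal3⟩ := ht.balanced
  obtain ⟨h₀, hh₀, -⟩ := ht.lift T₀ (fun m x => (⟨τ m x, mem m x⟩ : T₀))
    ⟨fun m m' x => Subtype.ext (bal1 m m' x),
     fun m x x' => Subtype.ext (bal2 m x x'),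
     fun a m x => Subtype.ext (bal3 a m x)⟩
  obtain ⟨h₁, -, huniq⟩ := ht.lift T τ ht.balanced
  have e1 : T₀.subtype.comp h₀ = AddMonoidHom.id T := by
    rw [huniq (T₀.subtype.comp h₀) (fun m x => congrArg Subtype.val (hh₀ m x)),
        huniq (AddMonoidHom.id T) (fun m x => rfl)]
  rw [eq_top_iff]
  intro z _
  have hz := DFunLike.congr_fun e1 z
  simp only [AddMonoidHom.coe_comp, Function.comp_apply, AddSubgroup.coe_subtype,
    AddMonoidHom.id_apply] at hz
  rw [← hz]
  exact (h₀ z).2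

theorem IsBTensor.ind {R₀ : Type u} [Ring R₀] {M₀ X₀ : Type u}
    [AddCommGroup M₀] [AddCommGroup X₀] {ra : M₀ → R₀ → M₀} {la : R₀ → X₀ → X₀}
    {T : Type u} [AddCommGroup T] {τ : M₀ → X₀ → T}
    (ht : IsBTensor R₀ ra la T τ) {Z : Type u} [AddCommGroup Z]
    (F G : T → Z) (hF : ∀ a b, F (a + b) = F a + F b)
    (hG : ∀ a b, G (a + b) = G a + G b)
    (h : ∀ m x, F (τ m x) = G (τ m x)) (z : T) : F z = G z := by
  have heq : Set.EqOn (⇑(AddMonoidHom.mk' F hF)) (⇑(AddMonoidHom.mk' G hG))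
      {z : T | ∃ m x, z = τ m x} := by rintro _ ⟨m, x, rfl⟩; exact h m x
  have h2 := AddMonoidHom.eqOn_closure heq
  rw [ht.closure_top] at h2
  exact h2 (by simp)

lemma sum_apply_left {ι : Type*} {T W Z : Type u} [AddCommGroup T] [AddCommGroup Z]
    (s : Finset ι) (f : T → W → Z) (hf : ∀ a b w, f (a + b) w = f a w + f b w)
    (g : ι → T) (w : W) : f (∑ x ∈ s, g x) w = ∑ x ∈ s, f (g x) w :=
  map_sum (AddMonoidHom.mk' (fun u => f u w) (fun a b => hf a b w)) g s

lemma sum_apply_right {ι : Type*} {T W Z : Type u} [AddCommGroup T] [AddCommGroup Z]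
    (s : Finset ι) (f : W → T → Z) (hf : ∀ w a b, f w (a + b) = f w a + f w b)
    (g : ι → T) (w : W) : f w (∑ x ∈ s, g x) = ∑ x ∈ s, f w (g x) :=
  map_sum (AddMonoidHom.mk' (fun u => f w u) (fun a b => hf w a b)) g s

lemma Ncalc {S N L : Type u} [Ring S]
    [AddCommGroup N] [AddCommGroup L] (t : Fin n)
    [Module (A t) N] [Module Sᵐᵒᵖ N] [SMulCommClass (A t) Sᵐᵒᵖ N]
    [Module S L] [Module ((A t)ᵐᵒᵖ) L] [SMulCommClass S ((A t)ᵐᵒᵖ) L]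
    (ctx : GenMoritaCtx n A M) (mc : MoritaCtx (A t) S N L)
    {Z : Type u} (i k : Fin n) (g : M i t → N → Z)
    (hg : ∀ (a : A t) m x, g (op a • m) x = g m (a • x))
    (m : M i t) (m₁ : M t k) (m₂ : M k t) (nn nn₂ : N) (l : L) :
    g (ctx.φ i k t (ctx.φ i t k (op (mc.zeta nn l) • m) m₁) m₂) nn₂
      = g m (op (mc.theta (op ((ctx.δ t).symm (ctx.φ t k t m₁ m₂)) • l) nn₂) • nn) := by
  generalize hA : (ctx.δ t).symm (ctx.φ t k t m₁ m₂) = a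
  have hA' : ctx.φ t k t m₁ m₂ = ctx.δ t a := by
    rw [← hA, AddEquiv.apply_symm_apply]
  rw [ctx.φ_balanced, ← ctx.φ_assoc, ctx.φ_smul_left, hA', ← ctx.δ_mul_left,
    ctx.φ_diag_right, hg, mul_smul, mc.theta_balanced, ← mc.assoc_left]

lemma Lcalc {S N L : Type u} [Ring S]
    [AddCommGroup N] [AddCommGroup L] (t : Fin n)
    [Module (A t) N] [Module Sᵐᵒᵖ N] [SMulCommClass (A t) Sᵐᵒᵖ N]
    [Module S L] [Module ((A t)ᵐᵒᵖ) L] [SMulCommClass S ((A t)ᵐᵒᵖ) L]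
    (ctx : GenMoritaCtx n A M) (mc : MoritaCtx (A t) S N L)
    {Z : Type u} (k j : Fin n) (g : L → M t j → Z)
    (hg : ∀ (a : A t) l x, g (op a • l) x = g l (a • x))
    (m : M t k) (m₂ : M k t) (m₃ : M t j) (nn : N) (l l₂ : L) :
    g l (ctx.φ t k j m (ctx.φ k t j (op (mc.zeta nn l₂) • m₂) m₃))
      = g (mc.theta (op ((ctx.δ t).symm (ctx.φ t k t m m₂)) • l) nn • l₂) m₃ := by
  generalize hA : (ctx.δ t).symm (ctx.φ t k t m m₂) = a
  have hA' : ctx.φ t k t m m₂ = ctx.δ t a := by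
    rw [← hA, AddEquiv.apply_symm_apply]
  rw [ctx.φ_balanced, ctx.φ_assoc, hA', ctx.φ_diag_left, smul_smul, ← hg,
    mc.assoc_right, smul_smul, ← MulOpposite.op_mul]

end StmtTwelveHelpers

set_option maxHeartbeats 2000000

/-- Theorem 3.10 of the paper: the tuple
`([A_i; M_ij], [A'_i; M'_ij]; N_m, L_m; |α|, |α'|)` is a Morita context: `N_m` and
`L_m` are bimodules (hypotheses above), `|α|` and `|α'|` are balanced bimodule
homomorphisms, and the mixed associativity conditions hold. -/

theorem stmt12 {n : ℕ} {A : Fin n → Type u} {M : Fin n → Fin n → Type u}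
    [∀ i, Ring (A i)] [∀ i j, AddCommGroup (M i j)]
    [∀ i j, Module (A i) (M i j)] [∀ i j, Module ((A j)ᵐᵒᵖ) (M i j)]
    [∀ i j, SMulCommClass (A i) ((A j)ᵐᵒᵖ) (M i j)]
    (ctx : GenMoritaCtx n A M) (t : Fin n)
    (S N L : Type u) [Ring S] [AddCommGroup N] [AddCommGroup L]
    [Module (A t) N] [Module Sᵐᵒᵖ N] [SMulCommClass (A t) Sᵐᵒᵖ N]
    [Module S L] [Module ((A t)ᵐᵒᵖ) L] [SMulCommClass S ((A t)ᵐᵒᵖ) L]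
    (mc : MoritaCtx (A t) S N L)
    (A' : Fin n → Type u) (M' : Fin n → Fin n → Type u)
    [∀ i, Ring (A' i)] [∀ i j, AddCommGroup (M' i j)]
    [∀ i j, Module (A' i) (M' i j)] [∀ i j, Module ((A' j)ᵐᵒᵖ) (M' i j)]
    [∀ i j, SMulCommClass (A' i) ((A' j)ᵐᵒᵖ) (M' i j)]
    (cs : CompSetup A M t S N L A' M')
    (ctx' : GenMoritaCtx n A' M')
    (hcomp : IsComposition A M t S N L A' M' ctx mc cs ctx')
    (Λ : Type u) [Ring Λ] (εΛ : Λ → ∀ i j, M i j) (hΛ : IsMatrixRing ctx Λ εΛ)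
    (Λ' : Type u) [Ring Λ'] (εΛ' : Λ' → ∀ i j, M' i j) (hΛ' : IsMatrixRing ctx' Λ' εΛ')
    (NN : Fin n → Fin n → Type u) [∀ i j, AddCommGroup (NN i j)]
    (ce : ColExc A M t N NN)
    (LL : Fin n → Fin n → Type u) [∀ i j, AddCommGroup (LL i j)]
    (re : RowExc A M t L LL)
    -- the [A_i; M_ij]–[A'_i; M'_ij]-bimodule structure on the column-excision N_m
    [Module Λ (∀ i j, NN i j)] [Module Λ'ᵐᵒᵖ (∀ i j, NN i j)]
    [SMulCommClass Λ Λ'ᵐᵒᵖ (∀ i j, NN i j)]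
    (β : ∀ i k j, M i k → NN k j → NN i j)
    (hβ : ColExcLeft A M t N NN ctx ce β)
    (β' : ∀ i k j, NN i k → M' k j → NN i j)
    (hβ' : ColExcRight A M t S N L A' M' NN ctx mc cs ce β')
    (hNsmulL : ∀ (c : Λ) (x : ∀ i j, NN i j) (i j : Fin n),
      (c • x) i j = ∑ k, β i k j (εΛ c i k) (x k j))
    (hNsmulR : ∀ (c' : Λ') (x : ∀ i j, NN i j) (i j : Fin n),
      (op c' • x) i j = ∑ k, β' i k j (x i k) (εΛ' c' k j))
    -- the [A'_i; M'_ij]–[A_i; M_ij]-bimodule structure on the row-excision L_m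
    [Module Λ' (∀ i j, LL i j)] [Module Λᵐᵒᵖ (∀ i j, LL i j)]
    [SMulCommClass Λ' Λᵐᵒᵖ (∀ i j, LL i j)]
    (γ' : ∀ i k j, M' i k → LL k j → LL i j)
    (hγ' : RowExcLeft A M t S N L A' M' LL ctx mc cs re γ')
    (γ : ∀ i k j, LL i k → M k j → LL i j)
    (hγ : RowExcRight A M t L LL ctx re γ)
    (hLsmulL : ∀ (c' : Λ') (y : ∀ i j, LL i j) (i j : Fin n),
      (c' • y) i j = ∑ k, γ' i k j (εΛ' c' i k) (y k j))
    (hLsmulR : ∀ (c : Λ) (y : ∀ i j, LL i j) (i j : Fin n),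
      (op c • y) i j = ∑ k, γ i k j (y i k) (εΛ c k j))
    -- the column-row ligation and the map |α| it induces into Λ = [A_i; M_ij]
    (α : ∀ i k j, NN i k → LL k j → M i j)
    (hα : ColRowLigation A M t S N L NN LL ctx mc ce re α)
    (Abar : (∀ i j, NN i j) → (∀ i j, LL i j) → Λ)
    (hAbar : ∀ x y, εΛ (Abar x y) = fun i j => ∑ k, α i k j (x i k) (y k j))
    -- the row-column ligation and the map |α'| it induces into Λ' = [A'_i; M'_ij]
    (α' : ∀ i k j, LL i k → NN k j → M' i j)
    (hα' : RowColLigation A M t S N L A' M' NN LL ctx mc cs ce re α')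
    (Abar' : (∀ i j, LL i j) → (∀ i j, NN i j) → Λ')
    (hAbar' : ∀ y x, εΛ' (Abar' y x) = fun i j => ∑ k, α' i k j (y i k) (x k j)) :
    (∀ (x : ∀ i j, NN i j) (y : ∀ i j, LL i j) (c' : Λ'),
      Abar (op c' • x) y = Abar x (c' • y)) ∧
    (∀ (y : ∀ i j, LL i j) (x : ∀ i j, NN i j) (c : Λ),
      Abar' (op c • y) x = Abar' y (c • x)) ∧
    (∀ (c : Λ) (x : ∀ i j, NN i j) (y : ∀ i j, LL i j),
      Abar (c • x) y = c * Abar x y) ∧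
    (∀ (x : ∀ i j, NN i j) (y : ∀ i j, LL i j) (c : Λ),
      Abar x (op c • y) = Abar x y * c) ∧
    (∀ (c' : Λ') (y : ∀ i j, LL i j) (x : ∀ i j, NN i j),
      Abar' (c' • y) x = c' * Abar' y x) ∧
    (∀ (y : ∀ i j, LL i j) (x : ∀ i j, NN i j) (c' : Λ'),
      Abar' y (op c' • x) = Abar' y x * c') ∧
    (∀ (x x' : ∀ i j, NN i j) (y : ∀ i j, LL i j),
      Abar x y • x' = op (Abar' y x') • x) ∧
    (∀ (y y' : ∀ i j, LL i j) (x : ∀ i j, NN i j),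
      Abar' y x • y' = op (Abar x y') • y) := by
  -- Component-level identities.
  have key1 : ∀ i h k j (u : NN i h) (v : M' h k) (w : LL k j),
      α i k j (β' i h k u v) w = α i h j u (γ' h k j v w) := by
    intro i h k j u v w
    by_cases hh : t = h
    · subst hh
      by_cases hk : t = k
      · subst hk
        obtain ⟨s, rfl⟩ := cs.uS.surjective v
        refine (ce.π_tensor i).ind
          (fun u => α i t j (β' i t t u (cs.uS s)) w)
          (fun u => α i t j u (γ' t t j (cs.uS s) w))
          (fun a b => by simp only [hβ'.add_left, hα.add_left])
          (fun a b => by simp only [hα.add_left])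
          (fun m nn => ?_) u
        refine (re.lp_tensor j).ind
          (fun w => α i t j (β' i t t (ce.π i m nn) (cs.uS s)) w)
          (fun w => α i t j (ce.π i m nn) (γ' t t j (cs.uS s) w))
          (fun a b => by simp only [hα.add_right])
          (fun a b => by simp only [hγ'.add_right, hα.add_right])
          (fun l m₂ => ?_) w
        simp only [hβ'.spec₄, hγ'.spec₄, hα.spec_t, mc.zeta_balanced]
      · replace hk : k ≠ t := Ne.symm hk
        obtain ⟨y, rfl⟩ := (re.el k j hk).surjective w
        refine (ce.π_tensor i).ind
          (fun u => α i k j (β' i t k u v) (re.el k j hk y))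
          (fun u => α i t j u (γ' t k j v (re.el k j hk y)))
          (fun a b => by simp only [hβ'.add_left, hα.add_left])
          (fun a b => by simp only [hα.add_left])
          (fun m nn => ?_) u
        refine (cs.tmulL_tensor k hk).ind
          (fun v => α i k j (β' i t k (ce.π i m nn) v) (re.el k j hk y))
          (fun v => α i t j (ce.π i m nn) (γ' t k j v (re.el k j hk y)))
          (fun a b => by simp only [hβ'.add_right, hα.add_left])
          (fun a b => by simp only [hγ'.add_left, hα.add_right])
          (fun l z => ?_) v
        simp only [hβ'.spec₃, hγ'.spec₂, hα.spec_ne, hα.spec_t, ctx.φ_assoc]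
    · replace hh : h ≠ t := Ne.symm hh
      by_cases hk : t = k
      · subst hk
        obtain ⟨x, rfl⟩ := (ce.en i h hh).surjective u
        refine (cs.tmulN_tensor h hh).ind
          (fun v => α i t j (β' i h t (ce.en i h hh x) v) w)
          (fun v => α i h j (ce.en i h hh x) (γ' h t j v w))
          (fun a b => by simp only [hβ'.add_right, hα.add_left])
          (fun a b => by simp only [hγ'.add_left, hα.add_right])
          (fun m nn => ?_) v
        refine (re.lp_tensor j).ind
          (fun w => α i t j (β' i h t (ce.en i h hh x) (cs.tmulN h hh m nn)) w)
          (fun w => α i h j (ce.en i h hh x) (γ' h t j (cs.tmulN h hh m nn) w))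
          (fun a b => by simp only [hα.add_right])
          (fun a b => by simp only [hγ'.add_right, hα.add_right])
          (fun l m₂ => ?_) w
        simp only [hβ'.spec₂, hγ'.spec₃, hα.spec_t, hα.spec_ne, ← ctx.φ_smul_right,
          ctx.φ_assoc]
      · replace hk : k ≠ t := Ne.symm hk
        obtain ⟨x, rfl⟩ := (ce.en i h hh).surjective u
        obtain ⟨z, rfl⟩ := (cs.ee h k hh hk).surjective v
        obtain ⟨y, rfl⟩ := (re.el k j hk).surjective w
        simp only [hβ'.spec₁, hγ'.spec₁, hα.spec_ne, ctx.φ_assoc]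
  have key2 : ∀ i h k j (u : LL i h) (v : M h k) (w : NN k j),
      α' i k j (γ i h k u v) w = α' i h j u (β h k j v w) := by
    intro i h k j u v w
    by_cases hi : t = i
    · subst hi
      by_cases hj : t = j
      · subst hj
        refine (re.lp_tensor h).ind
          (fun u => α' t k t (γ t h k u v) w)
          (fun u => α' t h t u (β h k t v w))
          (fun a b => by simp only [hγ.add_left, hα'.add_left])
          (fun a b => by simp only [hα'.add_left])
          (fun l m => ?_) u
        refine (ce.π_tensor k).ind
          (fun w => α' t k t (γ t h k (re.lp h l m) v) w)
          (fun w => α' t h t (re.lp h l m) (β h k t v w))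
          (fun a b => by simp only [hα'.add_right])
          (fun a b => by simp only [hβ.add_right, hα'.add_right])
          (fun m₂ nn => ?_) w
        simp only [hγ.spec_t, hβ.spec_t, hα'.spec₄, ctx.φ_assoc]
      · replace hj : j ≠ t := Ne.symm hj
        obtain ⟨y, rfl⟩ := (ce.en k j hj).surjective w
        refine (re.lp_tensor h).ind
          (fun u => α' t k j (γ t h k u v) (ce.en k j hj y))
          (fun u => α' t h j u (β h k j v (ce.en k j hj y)))
          (fun a b => by simp only [hγ.add_left, hα'.add_left])
          (fun a b => by simp only [hα'.add_left])
          (fun l m => ?_) u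
        simp only [hγ.spec_t, hβ.spec_ne, hα'.spec₃, ctx.φ_assoc]
    · replace hi : i ≠ t := Ne.symm hi
      by_cases hj : t = j
      · subst hj
        obtain ⟨x, rfl⟩ := (re.el i h hi).surjective u
        refine (ce.π_tensor k).ind
          (fun w => α' i k t (γ i h k (re.el i h hi x) v) w)
          (fun w => α' i h t (re.el i h hi x) (β h k t v w))
          (fun a b => by simp only [hα'.add_right])
          (fun a b => by simp only [hβ.add_right, hα'.add_right])
          (fun m nn => ?_) w
        simp only [hγ.spec_ne, hβ.spec_t, hα'.spec₂, ctx.φ_assoc]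
      · replace hj : j ≠ t := Ne.symm hj
        obtain ⟨x, rfl⟩ := (re.el i h hi).surjective u
        obtain ⟨y, rfl⟩ := (ce.en k j hj).surjective w
        simp only [hγ.spec_ne, hβ.spec_ne, hα'.spec₁, ctx.φ_assoc]
  have key3 : ∀ i k h j (z : M i k) (u : NN k h) (w : LL h j),
      α i h j (β i k h z u) w = ctx.φ i k j z (α k h j u w) := by
    intro i k h j z u w
    by_cases hh : t = h
    · subst hh
      refine (ce.π_tensor k).ind
        (fun u => α i t j (β i k t z u) w)
        (fun u => ctx.φ i k j z (α k t j u w))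
        (fun a b => by simp only [hβ.add_right, hα.add_left])
        (fun a b => by simp only [hα.add_left, ctx.φ_add_right])
        (fun m nn => ?_) u
      refine (re.lp_tensor j).ind
        (fun w => α i t j (β i k t z (ce.π k m nn)) w)
        (fun w => ctx.φ i k j z (α k t j (ce.π k m nn) w))
        (fun a b => by simp only [hα.add_right])
        (fun a b => by simp only [hα.add_right, ctx.φ_add_right])
        (fun l m₂ => ?_) w
      simp only [hβ.spec_t, hα.spec_t, ← ctx.φ_smul_right, ctx.φ_assoc]
    · replace hh : h ≠ t := Ne.symm hh
      obtain ⟨x, rfl⟩ := (ce.en k h hh).surjective u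
      obtain ⟨y, rfl⟩ := (re.el h j hh).surjective w
      simp only [hβ.spec_ne, hα.spec_ne, ctx.φ_assoc]
  have key4 : ∀ i h k j (u : NN i h) (w : LL h k) (z : M k j),
      α i h j u (γ h k j w z) = ctx.φ i k j (α i h k u w) z := by
    intro i h k j u w z
    by_cases hh : t = h
    · subst hh
      refine (ce.π_tensor i).ind
        (fun u => α i t j u (γ t k j w z))
        (fun u => ctx.φ i k j (α i t k u w) z)
        (fun a b => by simp only [hα.add_left])
        (fun a b => by simp only [hα.add_left, ctx.φ_add_left])
        (fun m nn => ?_) u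
      refine (re.lp_tensor k).ind
        (fun w => α i t j (ce.π i m nn) (γ t k j w z))
        (fun w => ctx.φ i k j (α i t k (ce.π i m nn) w) z)
        (fun a b => by simp only [hγ.add_left, hα.add_right])
        (fun a b => by simp only [hα.add_right, ctx.φ_add_left])
        (fun l m₂ => ?_) w
      simp only [hγ.spec_t, hα.spec_t, ctx.φ_assoc]
    · replace hh : h ≠ t := Ne.symm hh
      obtain ⟨x, rfl⟩ := (ce.en i h hh).surjective u
      obtain ⟨y, rfl⟩ := (re.el h k hh).surjective w
      simp only [hγ.spec_ne, hα.spec_ne, ctx.φ_assoc]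
  have key5 : ∀ i k h j (v : M' i k) (u : LL k h) (w : NN h j),
      α' i h j (γ' i k h v u) w = ctx'.φ i k j v (α' k h j u w) := by
    intro i k h j v u w
    by_cases hi : t = i
    · subst hi
      by_cases hk : t = k
      · subst hk
        obtain ⟨s, rfl⟩ := cs.uS.surjective v
        by_cases hj : t = j
        · subst hj
          refine (re.lp_tensor h).ind
            (fun u => α' t h t (γ' t t h (cs.uS s) u) w)
            (fun u => ctx'.φ t t t (cs.uS s) (α' t h t u w))
            (fun a b => by simp only [hγ'.add_right, hα'.add_left])
            (fun a b => by simp only [hα'.add_left, ctx'.φ_add_right])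
            (fun l m => ?_) u
          refine (ce.π_tensor h).ind
            (fun w => α' t h t (γ' t t h (cs.uS s) (re.lp h l m)) w)
            (fun w => ctx'.φ t t t (cs.uS s) (α' t h t (re.lp h l m) w))
            (fun a b => by simp only [hα'.add_right])
            (fun a b => by simp only [hα'.add_right, ctx'.φ_add_right])
            (fun m₂ nn₂ => ?_) w
          simp only [hγ'.spec₄, hα'.spec₄, hcomp.phi_ttt]
          rw [← smul_comm, mc.theta_left]
        · replace hj : j ≠ t := Ne.symm hj
          obtain ⟨y, rfl⟩ := (ce.en h j hj).surjective w
          refine (re.lp_tensor h).ind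
            (fun u => α' t h j (γ' t t h (cs.uS s) u) (ce.en h j hj y))
            (fun u => ctx'.φ t t j (cs.uS s) (α' t h j u (ce.en h j hj y)))
            (fun a b => by simp only [hγ'.add_right, hα'.add_left])
            (fun a b => by simp only [hα'.add_left, ctx'.φ_add_right])
            (fun l m => ?_) u
          simp only [hγ'.spec₄, hα'.spec₃, hcomp.phi_ttj]
      · replace hk : k ≠ t := Ne.symm hk
        -- i = t, k ≠ t
        refine (cs.tmulL_tensor k hk).ind
          (fun v => α' t h j (γ' t k h v u) w)
          (fun v => ctx'.φ t k j v (α' k h j u w))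
          (fun a b => by simp only [hγ'.add_left, hα'.add_left])
          (fun a b => by simp only [ctx'.φ_add_left])
          (fun l m => ?_) v
        obtain ⟨x, rfl⟩ := (re.el k h hk).surjective u
        by_cases hj : t = j
        · subst hj
          refine (ce.π_tensor h).ind
            (fun w => α' t h t (γ' t k h (cs.tmulL k hk l m) (re.el k h hk x)) w)
            (fun w => ctx'.φ t k t (cs.tmulL k hk l m) (α' k h t (re.el k h hk x) w))
            (fun a b => by simp only [hα'.add_right])
            (fun a b => by simp only [hα'.add_right, ctx'.φ_add_right])
            (fun m₂ nn₂ => ?_) w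
          simp only [hγ'.spec₂, hα'.spec₄, hα'.spec₂, hcomp.phi_tkt, ctx.φ_assoc]
        · replace hj : j ≠ t := Ne.symm hj
          obtain ⟨y, rfl⟩ := (ce.en h j hj).surjective w
          simp only [hγ'.spec₂, hα'.spec₃, hα'.spec₁, hcomp.phi_tkj, ctx.φ_assoc]
    · replace hi : i ≠ t := Ne.symm hi
      by_cases hk : t = k
      · subst hk
        refine (cs.tmulN_tensor i hi).ind
          (fun v => α' i h j (γ' i t h v u) w)
          (fun v => ctx'.φ i t j v (α' t h j u w))
          (fun a b => by simp only [hγ'.add_left, hα'.add_left])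
          (fun a b => by simp only [ctx'.φ_add_left])
          (fun m nn => ?_) v
        by_cases hj : t = j
        · subst hj
          refine (re.lp_tensor h).ind
            (fun u => α' i h t (γ' i t h (cs.tmulN i hi m nn) u) w)
            (fun u => ctx'.φ i t t (cs.tmulN i hi m nn) (α' t h t u w))
            (fun a b => by simp only [hγ'.add_right, hα'.add_left])
            (fun a b => by simp only [hα'.add_left, ctx'.φ_add_right])
            (fun l m₁ => ?_) u
          refine (ce.π_tensor h).ind
            (fun w => α' i h t (γ' i t h (cs.tmulN i hi m nn) (re.lp h l m₁)) w)
            (fun w => ctx'.φ i t t (cs.tmulN i hi m nn) (α' t h t (re.lp h l m₁) w))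
            (fun a b => by simp only [hα'.add_right])
            (fun a b => by simp only [hα'.add_right, ctx'.φ_add_right])
            (fun m₂ nn₂ => ?_) w
          simp only [hγ'.spec₃, hα'.spec₂, hα'.spec₄, hcomp.phi_itt]
          exact Ncalc t ctx mc i h (cs.tmulN i hi)
            ((cs.tmulN_tensor i hi).balanced.2.2) m m₁ m₂ nn nn₂ l
        · replace hj : j ≠ t := Ne.symm hj
          obtain ⟨y, rfl⟩ := (ce.en h j hj).surjective w
          refine (re.lp_tensor h).ind
            (fun u => α' i h j (γ' i t h (cs.tmulN i hi m nn) u) (ce.en h j hj y))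
            (fun u => ctx'.φ i t j (cs.tmulN i hi m nn) (α' t h j u (ce.en h j hj y)))
            (fun a b => by simp only [hγ'.add_right, hα'.add_left])
            (fun a b => by simp only [hα'.add_left, ctx'.φ_add_right])
            (fun l m₁ => ?_) u
          simp only [hγ'.spec₃, hα'.spec₁, hα'.spec₃, hcomp.phi_itj, ctx.φ_assoc]
      · replace hk : k ≠ t := Ne.symm hk
        obtain ⟨z, rfl⟩ := (cs.ee i k hi hk).surjective v
        obtain ⟨x, rfl⟩ := (re.el k h hk).surjective u
        by_cases hj : t = j
        · subst hj
          refine (ce.π_tensor h).ind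
            (fun w => α' i h t (γ' i k h (cs.ee i k hi hk z) (re.el k h hk x)) w)
            (fun w => ctx'.φ i k t (cs.ee i k hi hk z) (α' k h t (re.el k h hk x) w))
            (fun a b => by simp only [hα'.add_right])
            (fun a b => by simp only [hα'.add_right, ctx'.φ_add_right])
            (fun m nn => ?_) w
          simp only [hγ'.spec₁, hα'.spec₂, hcomp.phi_ikt, ctx.φ_assoc]
        · replace hj : j ≠ t := Ne.symm hj
          obtain ⟨y, rfl⟩ := (ce.en h j hj).surjective w
          simp only [hγ'.spec₁, hα'.spec₁, hcomp.phi_ikj, ctx.φ_assoc]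
  have key6 : ∀ i h k j (u : LL i h) (w : NN h k) (v : M' k j),
      α' i h j u (β' h k j w v) = ctx'.φ i k j (α' i h k u w) v := by
    intro i h k j u w v
    by_cases hi : t = i
    · subst hi
      refine (re.lp_tensor h).ind
        (fun u => α' t h j u (β' h k j w v))
        (fun u => ctx'.φ t k j (α' t h k u w) v)
        (fun a b => by simp only [hα'.add_left])
        (fun a b => by simp only [hα'.add_left, ctx'.φ_add_left])
        (fun l m => ?_) u
      by_cases hk : t = k
      · subst hk
        refine (ce.π_tensor h).ind
          (fun w => α' t h j (re.lp h l m) (β' h t j w v))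
          (fun w => ctx'.φ t t j (α' t h t (re.lp h l m) w) v)
          (fun a b => by simp only [hβ'.add_left, hα'.add_right])
          (fun a b => by simp only [hα'.add_right, ctx'.φ_add_left])
          (fun m₂ nn => ?_) w
        by_cases hj : t = j
        · subst hj
          obtain ⟨s, rfl⟩ := cs.uS.surjective v
          simp only [hβ'.spec₄, hα'.spec₄, hcomp.phi_ttt, mc.theta_right]
        · replace hj : j ≠ t := Ne.symm hj
          refine (cs.tmulL_tensor j hj).ind
            (fun v => α' t h j (re.lp h l m) (β' h t j (ce.π h m₂ nn) v))
            (fun v => ctx'.φ t t j (α' t h t (re.lp h l m) (ce.π h m₂ nn)) v)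
            (fun a b => by simp only [hβ'.add_right, hα'.add_right])
            (fun a b => by simp only [ctx'.φ_add_right])
            (fun l₂ m₃ => ?_) v
          simp only [hβ'.spec₃, hα'.spec₃, hα'.spec₄, hcomp.phi_ttj]
          exact Lcalc t ctx mc h j (cs.tmulL j hj)
            ((cs.tmulL_tensor j hj).balanced.2.2) m m₂ m₃ nn l l₂
      · replace hk : k ≠ t := Ne.symm hk
        obtain ⟨y, rfl⟩ := (ce.en h k hk).surjective w
        by_cases hj : t = j
        · subst hj
          refine (cs.tmulN_tensor k hk).ind
            (fun v => α' t h t (re.lp h l m) (β' h k t (ce.en h k hk y) v))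
            (fun v => ctx'.φ t k t (α' t h k (re.lp h l m) (ce.en h k hk y)) v)
            (fun a b => by simp only [hβ'.add_right, hα'.add_right])
            (fun a b => by simp only [ctx'.φ_add_right])
            (fun m₂ nn => ?_) v
          simp only [hβ'.spec₂, hα'.spec₄, hα'.spec₃, hcomp.phi_tkt, ctx.φ_assoc]
        · replace hj : j ≠ t := Ne.symm hj
          obtain ⟨z, rfl⟩ := (cs.ee k j hk hj).surjective v
          simp only [hβ'.spec₁, hα'.spec₃, hcomp.phi_tkj, ctx.φ_assoc]
    · replace hi : i ≠ t := Ne.symm hi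
      obtain ⟨x, rfl⟩ := (re.el i h hi).surjective u
      by_cases hk : t = k
      · subst hk
        refine (ce.π_tensor h).ind
          (fun w => α' i h j (re.el i h hi x) (β' h t j w v))
          (fun w => ctx'.φ i t j (α' i h t (re.el i h hi x) w) v)
          (fun a b => by simp only [hβ'.add_left, hα'.add_right])
          (fun a b => by simp only [hα'.add_right, ctx'.φ_add_left])
          (fun m nn => ?_) w
        by_cases hj : t = j
        · subst hj
          obtain ⟨s, rfl⟩ := cs.uS.surjective v
          simp only [hβ'.spec₄, hα'.spec₂, hcomp.phi_itt]
        · replace hj : j ≠ t := Ne.symm hj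
          refine (cs.tmulL_tensor j hj).ind
            (fun v => α' i h j (re.el i h hi x) (β' h t j (ce.π h m nn) v))
            (fun v => ctx'.φ i t j (α' i h t (re.el i h hi x) (ce.π h m nn)) v)
            (fun a b => by simp only [hβ'.add_right, hα'.add_right])
            (fun a b => by simp only [ctx'.φ_add_right])
            (fun l₂ m₂ => ?_) v
          simp only [hβ'.spec₃, hα'.spec₁, hα'.spec₂, hcomp.phi_itj,
            ← ctx.φ_smul_right, ctx.φ_assoc]
      · replace hk : k ≠ t := Ne.symm hk
        obtain ⟨y, rfl⟩ := (ce.en h k hk).surjective w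
        by_cases hj : t = j
        · subst hj
          refine (cs.tmulN_tensor k hk).ind
            (fun v => α' i h t (re.el i h hi x) (β' h k t (ce.en h k hk y) v))
            (fun v => ctx'.φ i k t (α' i h k (re.el i h hi x) (ce.en h k hk y)) v)
            (fun a b => by simp only [hβ'.add_right, hα'.add_right])
            (fun a b => by simp only [ctx'.φ_add_right])
            (fun m nn => ?_) v
          simp only [hβ'.spec₂, hα'.spec₂, hα'.spec₁, hcomp.phi_ikt, ctx.φ_assoc]
        · replace hj : j ≠ t := Ne.symm hj
          obtain ⟨z, rfl⟩ := (cs.ee k j hk hj).surjective v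
          simp only [hβ'.spec₁, hα'.spec₁, hcomp.phi_ikj, ctx.φ_assoc]
  have key7 : ∀ i h k j (u : NN i h) (w : LL h k) (v : NN k j),
      β i k j (α i h k u w) v = β' i h j u (α' h k j w v) := by
    intro i h k j u w v
    by_cases hh : t = h
    · subst hh
      refine (ce.π_tensor i).ind
        (fun u => β i k j (α i t k u w) v)
        (fun u => β' i t j u (α' t k j w v))
        (fun a b => by simp only [hα.add_left, hβ.add_left])
        (fun a b => by simp only [hβ'.add_left])
        (fun m nn => ?_) u
      refine (re.lp_tensor k).ind
        (fun w => β i k j (α i t k (ce.π i m nn) w) v)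
        (fun w => β' i t j (ce.π i m nn) (α' t k j w v))
        (fun a b => by simp only [hα.add_right, hβ.add_left])
        (fun a b => by simp only [hα'.add_left, hβ'.add_right])
        (fun l m₁ => ?_) w
      by_cases hj : t = j
      · subst hj
        refine (ce.π_tensor k).ind
          (fun v => β i k t (α i t k (ce.π i m nn) (re.lp k l m₁)) v)
          (fun v => β' i t t (ce.π i m nn) (α' t k t (re.lp k l m₁) v))
          (fun a b => by simp only [hβ.add_right])
          (fun a b => by simp only [hα'.add_right, hβ'.add_right])
          (fun m₂ nn₂ => ?_) v
        simp only [hα.spec_t, hβ.spec_t, hα'.spec₄, hβ'.spec₄]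
        exact Ncalc t ctx mc i k (ce.π i) ((ce.π_tensor i).balanced.2.2)
          m m₁ m₂ nn nn₂ l
      · replace hj : j ≠ t := Ne.symm hj
        obtain ⟨z, rfl⟩ := (ce.en k j hj).surjective v
        simp only [hα.spec_t, hβ.spec_ne, hα'.spec₃, hβ'.spec₃, ctx.φ_assoc]
    · replace hh : h ≠ t := Ne.symm hh
      obtain ⟨x, rfl⟩ := (ce.en i h hh).surjective u
      obtain ⟨y, rfl⟩ := (re.el h k hh).surjective w
      by_cases hj : t = j
      · subst hj
        refine (ce.π_tensor k).ind
          (fun v => β i k t (α i h k (ce.en i h hh x) (re.el h k hh y)) v)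
          (fun v => β' i h t (ce.en i h hh x) (α' h k t (re.el h k hh y) v))
          (fun a b => by simp only [hβ.add_right])
          (fun a b => by simp only [hα'.add_right, hβ'.add_right])
          (fun m nn => ?_) v
        simp only [hα.spec_ne, hβ.spec_t, hα'.spec₂, hβ'.spec₂, ctx.φ_assoc]
      · replace hj : j ≠ t := Ne.symm hj
        obtain ⟨z, rfl⟩ := (ce.en k j hj).surjective v
        simp only [hα.spec_ne, hβ.spec_ne, hα'.spec₁, hβ'.spec₁, ctx.φ_assoc]
  have key8 : ∀ i h k j (u : LL i h) (w : NN h k) (v : LL k j),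
      γ' i k j (α' i h k u w) v = γ i h j u (α h k j w v) := by
    intro i h k j u w v
    by_cases hi : t = i
    · subst hi
      refine (re.lp_tensor h).ind
        (fun u => γ' t k j (α' t h k u w) v)
        (fun u => γ t h j u (α h k j w v))
        (fun a b => by simp only [hα'.add_left, hγ'.add_left])
        (fun a b => by simp only [hγ.add_left])
        (fun l m => ?_) u
      by_cases hk : t = k
      · subst hk
        refine (ce.π_tensor h).ind
          (fun w => γ' t t j (α' t h t (re.lp h l m) w) v)
          (fun w => γ t h j (re.lp h l m) (α h t j w v))
          (fun a b => by simp only [hα'.add_right, hγ'.add_left])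
          (fun a b => by simp only [hα.add_left, hγ.add_right])
          (fun m₂ nn => ?_) w
        refine (re.lp_tensor j).ind
          (fun v => γ' t t j (α' t h t (re.lp h l m) (ce.π h m₂ nn)) v)
          (fun v => γ t h j (re.lp h l m) (α h t j (ce.π h m₂ nn) v))
          (fun a b => by simp only [hγ'.add_right])
          (fun a b => by simp only [hα.add_right, hγ.add_right])
          (fun l₂ m₃ => ?_) v
        simp only [hα'.spec₄, hγ'.spec₄, hα.spec_t, hγ.spec_t]
        exact (Lcalc t ctx mc h j (re.lp j) ((re.lp_tensor j).balanced.2.2)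
          m m₂ m₃ nn l l₂).symm
      · replace hk : k ≠ t := Ne.symm hk
        obtain ⟨y, rfl⟩ := (ce.en h k hk).surjective w
        obtain ⟨z, rfl⟩ := (re.el k j hk).surjective v
        simp only [hα'.spec₃, hγ'.spec₂, hα.spec_ne, hγ.spec_t, ctx.φ_assoc]
    · replace hi : i ≠ t := Ne.symm hi
      obtain ⟨x, rfl⟩ := (re.el i h hi).surjective u
      by_cases hk : t = k
      · subst hk
        refine (ce.π_tensor h).ind
          (fun w => γ' i t j (α' i h t (re.el i h hi x) w) v)
          (fun w => γ i h j (re.el i h hi x) (α h t j w v))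
          (fun a b => by simp only [hα'.add_right, hγ'.add_left])
          (fun a b => by simp only [hα.add_left, hγ.add_right])
          (fun m nn => ?_) w
        refine (re.lp_tensor j).ind
          (fun v => γ' i t j (α' i h t (re.el i h hi x) (ce.π h m nn)) v)
          (fun v => γ i h j (re.el i h hi x) (α h t j (ce.π h m nn) v))
          (fun a b => by simp only [hγ'.add_right])
          (fun a b => by simp only [hα.add_right, hγ.add_right])
          (fun l m₂ => ?_) v
        simp only [hα'.spec₂, hγ'.spec₃, hα.spec_t, hγ.spec_ne,
          ← ctx.φ_smul_right, ctx.φ_assoc]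
      · replace hk : k ≠ t := Ne.symm hk
        obtain ⟨y, rfl⟩ := (ce.en h k hk).surjective w
        obtain ⟨z, rfl⟩ := (re.el k j hk).surjective v
        simp only [hα'.spec₁, hγ'.spec₁, hα.spec_ne, hγ.spec_ne, ctx.φ_assoc]
  refine ⟨?_, ?_, ?_, ?_, ?_, ?_, ?_, ?_⟩
  · intro x y c'
    apply hΛ.bijective.injective
    funext i j
    simp only [hAbar]
    calc (∑ k, α i k j ((op c' • x) i k) (y k j))
        = ∑ k, ∑ h, α i k j (β' i h k (x i h) (εΛ' c' h k)) (y k j) := by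
          refine Finset.sum_congr rfl fun k _ => ?_
          rw [hNsmulR]
          exact sum_apply_left _ (α i k j) (hα.add_left i k j) _ _
      _ = ∑ h, ∑ k, α i h j (x i h) (γ' h k j (εΛ' c' h k) (y k j)) := by
          rw [Finset.sum_comm]
          exact Finset.sum_congr rfl fun h _ =>
            Finset.sum_congr rfl fun k _ => key1 i h k j _ _ _
      _ = ∑ h, α i h j (x i h) ((c' • y) h j) := by
          refine Finset.sum_congr rfl fun h _ => ?_
          rw [hLsmulL]
          exact (sum_apply_right _ (α i h j) (hα.add_right i h j) _ _).symm
  · intro y x c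
    apply hΛ'.bijective.injective
    funext i j
    simp only [hAbar']
    calc (∑ k, α' i k j ((op c • y) i k) (x k j))
        = ∑ k, ∑ h, α' i k j (γ i h k (y i h) (εΛ c h k)) (x k j) := by
          refine Finset.sum_congr rfl fun k _ => ?_
          rw [hLsmulR]
          exact sum_apply_left _ (α' i k j) (hα'.add_left i k j) _ _
      _ = ∑ h, ∑ k, α' i h j (y i h) (β h k j (εΛ c h k) (x k j)) := by
          rw [Finset.sum_comm]
          exact Finset.sum_congr rfl fun h _ =>
            Finset.sum_congr rfl fun k _ => key2 i h k j _ _ _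
      _ = ∑ h, α' i h j (y i h) ((c • x) h j) := by
          refine Finset.sum_congr rfl fun h _ => ?_
          rw [hNsmulL]
          exact (sum_apply_right _ (α' i h j) (hα'.add_right i h j) _ _).symm
  · intro c x y
    apply hΛ.bijective.injective
    rw [hΛ.map_mul]
    funext i j
    simp only [hAbar, matMul]
    calc (∑ h, α i h j ((c • x) i h) (y h j))
        = ∑ h, ∑ k, α i h j (β i k h (εΛ c i k) (x k h)) (y h j) := by
          refine Finset.sum_congr rfl fun h _ => ?_
          rw [hNsmulL]
          exact sum_apply_left _ (α i h j) (hα.add_left i h j) _ _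
      _ = ∑ k, ∑ h, ctx.φ i k j (εΛ c i k) (α k h j (x k h) (y h j)) := by
          rw [Finset.sum_comm]
          exact Finset.sum_congr rfl fun k _ =>
            Finset.sum_congr rfl fun h _ => key3 i k h j _ _ _
      _ = ∑ k, ctx.φ i k j (εΛ c i k) (∑ h, α k h j (x k h) (y h j)) :=
          Finset.sum_congr rfl fun k _ =>
            (sum_apply_right _ (ctx.φ i k j) (ctx.φ_add_right i k j) _ _).symm
  · intro x y c
    apply hΛ.bijective.injective
    rw [hΛ.map_mul]
    funext i j
    simp only [hAbar, matMul]
    calc (∑ h, α i h j (x i h) ((op c • y) h j))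
        = ∑ h, ∑ k, α i h j (x i h) (γ h k j (y h k) (εΛ c k j)) := by
          refine Finset.sum_congr rfl fun h _ => ?_
          rw [hLsmulR]
          exact sum_apply_right _ (α i h j) (hα.add_right i h j) _ _
      _ = ∑ k, ∑ h, ctx.φ i k j (α i h k (x i h) (y h k)) (εΛ c k j) := by
          rw [Finset.sum_comm]
          exact Finset.sum_congr rfl fun k _ =>
            Finset.sum_congr rfl fun h _ => key4 i h k j _ _ _
      _ = ∑ k, ctx.φ i k j (∑ h, α i h k (x i h) (y h k)) (εΛ c k j) :=
          Finset.sum_congr rfl fun k _ =>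
            (sum_apply_left _ (ctx.φ i k j) (ctx.φ_add_left i k j) _ _).symm
  · intro c' y x
    apply hΛ'.bijective.injective
    rw [hΛ'.map_mul]
    funext i j
    simp only [hAbar', matMul]
    calc (∑ h, α' i h j ((c' • y) i h) (x h j))
        = ∑ h, ∑ k, α' i h j (γ' i k h (εΛ' c' i k) (y k h)) (x h j) := by
          refine Finset.sum_congr rfl fun h _ => ?_
          rw [hLsmulL]
          exact sum_apply_left _ (α' i h j) (hα'.add_left i h j) _ _
      _ = ∑ k, ∑ h, ctx'.φ i k j (εΛ' c' i k) (α' k h j (y k h) (x h j)) := by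
          rw [Finset.sum_comm]
          exact Finset.sum_congr rfl fun k _ =>
            Finset.sum_congr rfl fun h _ => key5 i k h j _ _ _
      _ = ∑ k, ctx'.φ i k j (εΛ' c' i k) (∑ h, α' k h j (y k h) (x h j)) :=
          Finset.sum_congr rfl fun k _ =>
            (sum_apply_right _ (ctx'.φ i k j) (ctx'.φ_add_right i k j) _ _).symm
  · intro y x c'
    apply hΛ'.bijective.injective
    rw [hΛ'.map_mul]
    funext i j
    simp only [hAbar', matMul]
    calc (∑ h, α' i h j (y i h) ((op c' • x) h j))
        = ∑ h, ∑ k, α' i h j (y i h) (β' h k j (x h k) (εΛ' c' k j)) := by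
          refine Finset.sum_congr rfl fun h _ => ?_
          rw [hNsmulR]
          exact sum_apply_right _ (α' i h j) (hα'.add_right i h j) _ _
      _ = ∑ k, ∑ h, ctx'.φ i k j (α' i h k (y i h) (x h k)) (εΛ' c' k j) := by
          rw [Finset.sum_comm]
          exact Finset.sum_congr rfl fun k _ =>
            Finset.sum_congr rfl fun h _ => key6 i h k j _ _ _
      _ = ∑ k, ctx'.φ i k j (∑ h, α' i h k (y i h) (x h k)) (εΛ' c' k j) :=
          Finset.sum_congr rfl fun k _ =>
            (sum_apply_left _ (ctx'.φ i k j) (ctx'.φ_add_left i k j) _ _).symm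
  · intro x x' y
    funext i j
    rw [hNsmulL, hNsmulR]
    calc (∑ k, β i k j (εΛ (Abar x y) i k) (x' k j))
        = ∑ k, ∑ h, β i k j (α i h k (x i h) (y h k)) (x' k j) := by
          refine Finset.sum_congr rfl fun k _ => ?_
          rw [hAbar]
          exact sum_apply_left _ (β i k j) (hβ.add_left i k j) _ _
      _ = ∑ h, ∑ k, β' i h j (x i h) (α' h k j (y h k) (x' k j)) := by
          rw [Finset.sum_comm]
          exact Finset.sum_congr rfl fun h _ =>
            Finset.sum_congr rfl fun k _ => key7 i h k j _ _ _
      _ = ∑ h, β' i h j (x i h) (εΛ' (Abar' y x') h j) := by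
          refine Finset.sum_congr rfl fun h _ => ?_
          rw [hAbar']
          exact (sum_apply_right _ (β' i h j) (hβ'.add_right i h j) _ _).symm
  · intro y y' x
    funext i j
    rw [hLsmulL, hLsmulR]
    calc (∑ k, γ' i k j (εΛ' (Abar' y x) i k) (y' k j))
        = ∑ k, ∑ h, γ' i k j (α' i h k (y i h) (x h k)) (y' k j) := by
          refine Finset.sum_congr rfl fun k _ => ?_
          rw [hAbar']
          exact sum_apply_left _ (γ' i k j) (hγ'.add_left i k j) _ _
      _ = ∑ h, ∑ k, γ i h j (y i h) (α h k j (x h k) (y' k j)) := by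
          rw [Finset.sum_comm]
          exact Finset.sum_congr rfl fun h _ =>
            Finset.sum_congr rfl fun k _ => key8 i h k j _ _ _
      _ = ∑ h, γ i h j (y i h) (εΛ (Abar x y') h j) := by
          refine Finset.sum_congr rfl fun h _ => ?_
          rw [hAbar]
          exact (sum_apply_right _ (γ i h j) (hγ.add_right i h j) _ _).symm
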